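/- Let V be a unital multiplicative partial isometry on H with unit elements 𝟙 = λ(ε̂) ∈ A and 𝟙̂ = ρ(ε) ∈ Â. Then 𝟙 = 𝟙̂ as operators on H. -/

import Mathlib

open Matrix

namespace MPIpaper

variable {n : Type*} [Fintype n] [DecidableEq n]

noncomputable section

/-- `W₁₂ = W ⊗ 1` on `H ⊗ H ⊗ H`. -/
def leg12 (V : Matrix (n × n) (n × n) ℂ) : Matrix (n × n × n) (n × n × n) ℂ :=
  Matrix.of fun p q => V (p.1, p.2.1) (q.1, q.2.1) * (if p.2.2 = q.2.2 then (1 : ℂ) else 0)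

/-- `W₂₃ = 1 ⊗ W` on `H ⊗ H ⊗ H`. -/
def leg23 (V : Matrix (n × n) (n × n) ℂ) : Matrix (n × n × n) (n × n × n) ℂ :=
  Matrix.of fun p q => (if p.1 = q.1 then (1 : ℂ) else 0) * V p.2 q.2

/-- `W₁₃ = (1⊗Σ)(W⊗1)(1⊗Σ)` on `H ⊗ H ⊗ H`. -/
def leg13 (V : Matrix (n × n) (n × n) ℂ) : Matrix (n × n × n) (n × n × n) ℂ :=
  Matrix.of fun p q => V (p.1, p.2.2) (q.1, q.2.2) * (if p.2.1 = q.2.1 then (1 : ℂ) else 0)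

/-- A multiplicative partial isometry: `VV*V = V`, the pentagon equation, and the
three auxiliary (hexagon-type) equations. -/
def IsMPI (V : Matrix (n × n) (n × n) ℂ) : Prop :=
  V * Vᴴ * V = V ∧
  leg23 V * leg12 V = leg12 V * leg13 V * leg23 V ∧
  leg13 V * leg23 V * (leg23 V)ᴴ = (leg12 V)ᴴ * leg12 V * leg13 V ∧
  leg12 V * (leg12 V)ᴴ * leg23 V = leg23 V * leg12 V * (leg12 V)ᴴ ∧
  leg12 V * (leg23 V)ᴴ * leg23 V = (leg23 V)ᴴ * leg23 V * leg12 V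

/-- `λ(ω) = (ω ⊗ id)(V)`. -/
def lam (ω : Matrix n n ℂ →ₗ[ℂ] ℂ) (V : Matrix (n × n) (n × n) ℂ) : Matrix n n ℂ :=
  Matrix.of fun i j => ω (Matrix.of fun a b => V (a, i) (b, j))

/-- `ρ(ω) = (id ⊗ ω)(V)`. -/
def rho (ω : Matrix n n ℂ →ₗ[ℂ] ℂ) (V : Matrix (n × n) (n × n) ℂ) : Matrix n n ℂ :=
  Matrix.of fun i j => ω (Matrix.of fun a b => V (i, a) (j, b))

/-- `1 ⊗ X` on `H ⊗ H`. -/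
def oneTensor (X : Matrix n n ℂ) : Matrix (n × n) (n × n) ℂ :=
  Matrix.of fun p q => (if p.1 = q.1 then (1 : ℂ) else 0) * X p.2 q.2

/-- `X ⊗ 1` on `H ⊗ H`. -/
def tensorOne (X : Matrix n n ℂ) : Matrix (n × n) (n × n) ℂ :=
  Matrix.of fun p q => X p.1 q.1 * (if p.2 = q.2 then (1 : ℂ) else 0)

/-- `Δ(X) = V (X ⊗ 1) V*`. -/
def Delta (V : Matrix (n × n) (n × n) ℂ) (X : Matrix n n ℂ) : Matrix (n × n) (n × n) ℂ :=
  V * tensorOne X * Vᴴ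

/-- `Δ̂(X) = V* (1 ⊗ X) V`. -/
def hatDelta (V : Matrix (n × n) (n × n) ℂ) (X : Matrix n n ℂ) : Matrix (n × n) (n × n) ℂ :=
  Vᴴ * oneTensor X * V

/-- `(ω ⊗ ω')(W)` for an operator `W` on `H ⊗ H`. -/
def applyBoth (ω ω' : Matrix n n ℂ →ₗ[ℂ] ℂ) (W : Matrix (n × n) (n × n) ℂ) : ℂ :=
  ω (Matrix.of fun i j => ω' (Matrix.of fun k l => W (i, k) (j, l)))

end

set_option linter.unusedSectionVars false

/-- The matrix-entry functional `X ↦ X a b`. -/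
def entryF (a b : n) : Matrix n n ℂ →ₗ[ℂ] ℂ where
  toFun X := X a b
  map_add' _ _ := rfl
  map_smul' _ _ := rfl

lemma entryF_apply (a b : n) (X : Matrix n n ℂ) : entryF a b X = X a b := rfl

lemma lin_comb {κ : Type*} [Fintype κ] (ω : Matrix n n ℂ →ₗ[ℂ] ℂ) (c : κ → ℂ)
    (f : κ → n → n → ℂ) :
    ω (Matrix.of fun a b => ∑ k, c k * f k a b) = ∑ k, c k * ω (Matrix.of (f k)) := by
  have h : (Matrix.of fun a b => ∑ k, c k * f k a b) = ∑ k, c k • Matrix.of (f k) := by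
    ext a b; simp [Matrix.sum_apply]
  rw [h, map_sum]; simp only [_root_.map_smul, smul_eq_mul]

lemma leg12_mul (A B : Matrix (n × n) (n × n) ℂ) : leg12 (A * B) = leg12 A * leg12 B := by
  ext ⟨a, i, u⟩ ⟨b, j, v⟩
  simp [leg12, Matrix.mul_apply, Fintype.sum_prod_type, mul_ite, ite_mul,
    Finset.sum_ite_eq, Finset.sum_ite_eq', Finset.mul_sum, Finset.sum_mul]

lemma leg23_mul (A B : Matrix (n × n) (n × n) ℂ) : leg23 (A * B) = leg23 A * leg23 B := by
  ext ⟨a, i, u⟩ ⟨b, j, v⟩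
  simp [leg23, Matrix.mul_apply, Fintype.sum_prod_type, mul_ite, ite_mul,
    Finset.sum_ite_eq, Finset.sum_ite_eq', Finset.mul_sum, Finset.sum_mul]

lemma leg12_conjT (A : Matrix (n × n) (n × n) ℂ) : leg12 Aᴴ = (leg12 A)ᴴ := by
  ext ⟨a, i, u⟩ ⟨b, j, v⟩
  simp [leg12, Matrix.conjTranspose_apply, eq_comm]
  split <;> simp

lemma leg23_conjT (A : Matrix (n × n) (n × n) ℂ) : leg23 Aᴴ = (leg23 A)ᴴ := by
  ext ⟨a, i, u⟩ ⟨b, j, v⟩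
  simp [leg23, Matrix.conjTranspose_apply, eq_comm]
  split <;> simp

lemma leg12_oneTensor (X : Matrix n n ℂ) : leg12 (oneTensor X) = leg23 (tensorOne X) := by
  ext ⟨a, i, u⟩ ⟨b, j, v⟩
  simp [leg12, leg23, oneTensor, tensorOne]

lemma oneTensor_mul_apply (X : Matrix n n ℂ) (W : Matrix (n × n) (n × n) ℂ) (a i b j : n) :
    (oneTensor X * W) (a, i) (b, j) = ∑ k, X i k * W (a, k) (b, j) := by
  simp [Matrix.mul_apply, oneTensor, Fintype.sum_prod_type, ite_mul, Finset.sum_ite_eq]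

lemma mul_oneTensor_apply (X : Matrix n n ℂ) (W : Matrix (n × n) (n × n) ℂ) (a i b j : n) :
    (W * oneTensor X) (a, i) (b, j) = ∑ k, W (a, i) (b, k) * X k j := by
  simp [Matrix.mul_apply, oneTensor, Fintype.sum_prod_type, mul_ite, ite_mul, mul_comm,
    Finset.sum_ite_eq, Finset.sum_ite_eq', mul_assoc]

lemma tensorOne_mul_apply (X : Matrix n n ℂ) (W : Matrix (n × n) (n × n) ℂ) (a i b j : n) :
    (tensorOne X * W) (a, i) (b, j) = ∑ k, X a k * W (k, i) (b, j) := by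
  simp [Matrix.mul_apply, tensorOne, Fintype.sum_prod_type, mul_ite, ite_mul,
    Finset.sum_ite_eq, Finset.sum_ite_eq']

lemma mul_tensorOne_apply (X : Matrix n n ℂ) (W : Matrix (n × n) (n × n) ℂ) (a i b j : n) :
    (W * tensorOne X) (a, i) (b, j) = ∑ k, W (a, i) (k, j) * X k b := by
  simp [Matrix.mul_apply, tensorOne, Fintype.sum_prod_type, mul_ite, ite_mul,
    Finset.sum_ite_eq, Finset.sum_ite_eq']

lemma leg12_mul_leg13_apply (A B : Matrix (n × n) (n × n) ℂ) (a i u b j v : n) :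
    (leg12 A * leg13 B) (a, i, u) (b, j, v) = ∑ c, A (a, i) (c, j) * B (c, u) (b, v) := by
  simp [Matrix.mul_apply, leg12, leg13, Fintype.sum_prod_type, mul_ite, ite_mul,
    Finset.sum_ite_eq, Finset.sum_ite_eq']

lemma leg13_mul_leg23_apply (A B : Matrix (n × n) (n × n) ℂ) (a i u b j v : n) :
    (leg13 A * leg23 B) (a, i, u) (b, j, v) = ∑ w, A (a, u) (b, w) * B (i, w) (j, v) := by
  simp [Matrix.mul_apply, leg13, leg23, Fintype.sum_prod_type, mul_ite, ite_mul,
    Finset.sum_ite_eq, Finset.sum_ite_eq']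

lemma leg23tensorOne_mul_apply (X : Matrix n n ℂ) (W : Matrix (n × n × n) (n × n × n) ℂ)
    (a i u : n) (q : n × n × n) :
    (leg23 (tensorOne X) * W) (a, i, u) q = ∑ k, X i k * W (a, k, u) q := by
  simp [Matrix.mul_apply, leg23, tensorOne, Fintype.sum_prod_type, mul_ite, ite_mul,
    Finset.sum_ite_eq, Finset.sum_ite_eq']

lemma mul_leg23tensorOne_apply (X : Matrix n n ℂ) (W : Matrix (n × n × n) (n × n × n) ℂ)
    (p : n × n × n) (b j v : n) :
    (W * leg23 (tensorOne X)) p (b, j, v) = ∑ k, W p (b, k, v) * X k j := by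
  simp [Matrix.mul_apply, leg23, tensorOne, Fintype.sum_prod_type, mul_ite, ite_mul,
    Finset.sum_ite_eq, Finset.sum_ite_eq']


theorem statement15 (V : Matrix (n × n) (n × n) ℂ) (hV : IsMPI V)
    (ε εhat : Matrix n n ℂ →ₗ[ℂ] ℂ)
    (hεhat : ∀ ω : Matrix n n ℂ →ₗ[ℂ] ℂ,
      lam εhat V * lam ω V = lam ω V ∧ lam ω V * lam εhat V = lam ω V)
    (hε : ∀ ω : Matrix n n ℂ →ₗ[ℂ] ℂ,
      rho ε V * rho ω V = rho ω V ∧ rho ω V * rho ε V = rho ω V) :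
    lam εhat V = rho ε V := by
  obtain ⟨hiso, hpent, hhex2, -, -⟩ := hV
  -- entrywise forms of the unit assumptions
  have u1e : ∀ a i b j : n, (∑ k, lam εhat V i k * V (a, k) (b, j)) = V (a, i) (b, j) := by
    intro a i b j
    have h := congrFun (congrFun (hεhat (entryF a b)).1 i) j
    simpa [Matrix.mul_apply, lam, entryF_apply] using h
  have u2e : ∀ a i b j : n, (∑ k, V (a, i) (b, k) * lam εhat V k j) = V (a, i) (b, j) := by
    intro a i b j
    have h := congrFun (congrFun (hεhat (entryF a b)).2 i) j
    simpa [Matrix.mul_apply, lam, entryF_apply] using h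
  have u3e : ∀ a i b j : n, (∑ k, rho ε V i k * V (k, a) (j, b)) = V (i, a) (j, b) := by
    intro a i b j
    have h := congrFun (congrFun (hε (entryF a b)).1 i) j
    simpa [Matrix.mul_apply, rho, entryF_apply] using h
  have u4e : ∀ a i b j : n, (∑ k, V (i, a) (k, b) * rho ε V k j) = V (i, a) (j, b) := by
    intro a i b j
    have h := congrFun (congrFun (hε (entryF a b)).2 i) j
    simpa [Matrix.mul_apply, rho, entryF_apply] using h
  -- operator forms
  have u2op : V * oneTensor (lam εhat V) = V := by
    ext ⟨a, i⟩ ⟨b, j⟩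
    rw [mul_oneTensor_apply]
    exact u2e a i b j
  have u3op : tensorOne (rho ε V) * V = V := by
    ext ⟨i, a⟩ ⟨j, b⟩
    rw [tensorOne_mul_apply]
    exact u3e a i b j
  -- partial isometry lifted to legs
  have h12iso : leg12 V * (leg12 V)ᴴ * leg12 V = leg12 V := by
    rw [← leg12_conjT, ← leg12_mul, ← leg12_mul, hiso]
  have h23iso : leg23 V * (leg23 V)ᴴ * leg23 V = leg23 V := by
    rw [← leg23_conjT, ← leg23_mul, ← leg23_mul, hiso]
  -- (♣) : V₂₃ V₁₂ V₂₃* = V₁₂ V₁₃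
  have club : leg23 V * leg12 V * (leg23 V)ᴴ = leg12 V * leg13 V := by
    have h1 : leg23 V * leg12 V * (leg23 V)ᴴ
        = leg12 V * (leg13 V * leg23 V * (leg23 V)ᴴ) := by
      rw [hpent]; simp only [mul_assoc]
    rw [h1, hhex2]
    have h2 : leg12 V * ((leg12 V)ᴴ * leg12 V * leg13 V)
        = leg12 V * (leg12 V)ᴴ * leg12 V * leg13 V := by
      simp only [mul_assoc]
    rw [h2, h12iso]
  -- (♦) : V₁₂* V₂₃ V₁₂ = V₁₃ V₂₃
  have diamond : (leg12 V)ᴴ * (leg23 V * leg12 V) = leg13 V * leg23 V := by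
    rw [hpent]
    have h1 : (leg12 V)ᴴ * (leg12 V * leg13 V * leg23 V)
        = ((leg12 V)ᴴ * leg12 V * leg13 V) * leg23 V := by
      simp only [mul_assoc]
    rw [h1, ← hhex2]
    have h2 : leg13 V * leg23 V * (leg23 V)ᴴ * leg23 V
        = leg13 V * (leg23 V * (leg23 V)ᴴ * leg23 V) := by
      simp only [mul_assoc]
    rw [h2, h23iso]
  -- Step A : (𝟙̂)₂ V₁₂ V₁₃ = V₁₂ V₁₃
  have hA : leg23 (tensorOne (rho ε V)) * (leg12 V * leg13 V) = leg12 V * leg13 V := by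
    calc leg23 (tensorOne (rho ε V)) * (leg12 V * leg13 V)
        = leg23 (tensorOne (rho ε V)) * leg23 V * leg12 V * (leg23 V)ᴴ := by
          rw [← club]; simp only [mul_assoc]
      _ = leg23 (tensorOne (rho ε V) * V) * leg12 V * (leg23 V)ᴴ := by rw [leg23_mul]
      _ = leg23 V * leg12 V * (leg23 V)ᴴ := by rw [u3op]
      _ = leg12 V * leg13 V := club
  -- Step B : V₁₃ V₂₃ (𝟙)₂ = V₁₃ V₂₃
  have hB : (leg13 V * leg23 V) * leg23 (tensorOne (lam εhat V)) = leg13 V * leg23 V := by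
    calc (leg13 V * leg23 V) * leg23 (tensorOne (lam εhat V))
        = (leg12 V)ᴴ * (leg23 V * (leg12 V * leg23 (tensorOne (lam εhat V)))) := by
          rw [← diamond]; simp only [mul_assoc]
      _ = (leg12 V)ᴴ * (leg23 V * (leg12 V * leg12 (oneTensor (lam εhat V)))) := by
          rw [leg12_oneTensor]
      _ = (leg12 V)ᴴ * (leg23 V * leg12 (V * oneTensor (lam εhat V))) := by rw [leg12_mul]
      _ = (leg12 V)ᴴ * (leg23 V * leg12 V) := by rw [u2op]
      _ = leg13 V * leg23 V := diamond
  -- Slice Step A on the third leg with ε : Σₖ 𝟙̂ᵢₖ V(a,k)(b,j) = V(a,i)(b,j)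
  have U5e : ∀ a i b j : n, (∑ k, rho ε V i k * V (a, k) (b, j)) = V (a, i) (b, j) := by
    intro a i b j
    have hAe : ∀ u v : n,
        (∑ p : n × n, (rho ε V i p.1 * V (a, p.1) (p.2, j)) * V (p.2, u) (b, v))
          = ∑ c, V (a, i) (c, j) * V (c, u) (b, v) := by
      intro u v
      have h := congrFun (congrFun hA (a, i, u)) (b, j, v)
      rw [leg23tensorOne_mul_apply] at h
      simp only [leg12_mul_leg13_apply] at h
      calc (∑ p : n × n, (rho ε V i p.1 * V (a, p.1) (p.2, j)) * V (p.2, u) (b, v))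
          = ∑ k, rho ε V i k * ∑ c, V (a, k) (c, j) * V (c, u) (b, v) := by
            rw [Fintype.sum_prod_type]
            refine Finset.sum_congr rfl fun k _ => ?_
            rw [Finset.mul_sum]
            refine Finset.sum_congr rfl fun c _ => ?_
            ring
        _ = ∑ c, V (a, i) (c, j) * V (c, u) (b, v) := h
    have hM : (Matrix.of fun u v =>
          ∑ p : n × n, (rho ε V i p.1 * V (a, p.1) (p.2, j)) * V (p.2, u) (b, v))
        = Matrix.of fun u v => ∑ c, V (a, i) (c, j) * V (c, u) (b, v) := by
      ext u v
      simp only [Matrix.of_apply]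
      exact hAe u v
    have hL := congrArg ε hM
    rw [lin_comb ε (fun p : n × n => rho ε V i p.1 * V (a, p.1) (p.2, j))
      (fun p : n × n => fun u v => V (p.2, u) (b, v))] at hL
    rw [lin_comb ε (fun c : n => V (a, i) (c, j))
      (fun c : n => fun u v => V (c, u) (b, v))] at hL
    have hrho : ∀ c : n, ε (Matrix.of fun u v => V (c, u) (b, v)) = rho ε V c b :=
      fun c => rfl
    simp only [hrho] at hL
    have hR : (∑ c, V (a, i) (c, j) * rho ε V c b) = V (a, i) (b, j) := u4e i a j b
    have hL2 : (∑ p : n × n, rho ε V i p.1 * V (a, p.1) (p.2, j) * rho ε V p.2 b)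
        = ∑ k, rho ε V i k * V (a, k) (b, j) := by
      rw [Fintype.sum_prod_type]
      refine Finset.sum_congr rfl fun k _ => ?_
      have h3 : (∑ c, rho ε V i k * V (a, k) (c, j) * rho ε V c b)
          = rho ε V i k * ∑ c, V (a, k) (c, j) * rho ε V c b := by
        rw [Finset.mul_sum]
        refine Finset.sum_congr rfl fun c _ => ?_
        ring
      rw [h3, u4e k a j b]
    rw [hL2, hR] at hL
    exact hL
  -- Slice Step B on the first leg with ε̂ : Σₖ V(i,u)(k,v) 𝟙ₖⱼ = V(i,u)(j,v)
  have U6e : ∀ i u j v : n, (∑ k, V (i, u) (k, v) * lam εhat V k j) = V (i, u) (j, v) := by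
    intro i u j v
    have hBe : ∀ a b : n,
        (∑ p : n × n, (V (i, p.2) (p.1, v) * lam εhat V p.1 j) * V (a, u) (b, p.2))
          = ∑ w, V (i, w) (j, v) * V (a, u) (b, w) := by
      intro a b
      have h := congrFun (congrFun hB (a, i, u)) (b, j, v)
      rw [mul_leg23tensorOne_apply] at h
      simp only [leg13_mul_leg23_apply] at h
      calc (∑ p : n × n, (V (i, p.2) (p.1, v) * lam εhat V p.1 j) * V (a, u) (b, p.2))
          = ∑ k, (∑ w, V (a, u) (b, w) * V (i, w) (k, v)) * lam εhat V k j := by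
            rw [Fintype.sum_prod_type]
            refine Finset.sum_congr rfl fun k _ => ?_
            rw [Finset.sum_mul]
            refine Finset.sum_congr rfl fun w _ => ?_
            ring
        _ = ∑ w, V (a, u) (b, w) * V (i, w) (j, v) := h
        _ = ∑ w, V (i, w) (j, v) * V (a, u) (b, w) :=
            Finset.sum_congr rfl fun w _ => mul_comm _ _
    have hM : (Matrix.of fun a b =>
          ∑ p : n × n, (V (i, p.2) (p.1, v) * lam εhat V p.1 j) * V (a, u) (b, p.2))
        = Matrix.of fun a b => ∑ w, V (i, w) (j, v) * V (a, u) (b, w) := by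
      ext a b
      simp only [Matrix.of_apply]
      exact hBe a b
    have hL := congrArg εhat hM
    rw [lin_comb εhat (fun p : n × n => V (i, p.2) (p.1, v) * lam εhat V p.1 j)
      (fun p : n × n => fun a b => V (a, u) (b, p.2))] at hL
    rw [lin_comb εhat (fun w : n => V (i, w) (j, v))
      (fun w : n => fun a b => V (a, u) (b, w))] at hL
    have hlam : ∀ w : n, εhat (Matrix.of fun a b => V (a, u) (b, w)) = lam εhat V u w :=
      fun w => rfl
    simp only [hlam] at hL
    have hR : (∑ w, V (i, w) (j, v) * lam εhat V u w) = V (i, u) (j, v) := by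
      rw [← u1e i u j v]
      exact Finset.sum_congr rfl fun w _ => mul_comm _ _
    have hL2 : (∑ p : n × n, V (i, p.2) (p.1, v) * lam εhat V p.1 j * lam εhat V u p.2)
        = ∑ k, V (i, u) (k, v) * lam εhat V k j := by
      rw [Fintype.sum_prod_type]
      refine Finset.sum_congr rfl fun k _ => ?_
      have h3 : (∑ w, V (i, w) (k, v) * lam εhat V k j * lam εhat V u w)
          = (∑ w, lam εhat V u w * V (i, w) (k, v)) * lam εhat V k j := by
        rw [Finset.sum_mul]
        refine Finset.sum_congr rfl fun w _ => ?_
        ring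
      rw [h3, u1e i u k v]
    rw [hL2, hR] at hL
    exact hL
  -- Endgame : 𝟙 = 𝟙̂𝟙 = 𝟙̂
  ext i j
  have step1 : lam εhat V i j = ∑ k, rho ε V i k * lam εhat V k j := by
    have h1 : (Matrix.of fun a b => V (a, i) (b, j))
        = Matrix.of fun a b => ∑ k, rho ε V i k * V (a, k) (b, j) := by
      ext a b
      simp only [Matrix.of_apply]
      exact (U5e a i b j).symm
    show εhat (Matrix.of fun a b => V (a, i) (b, j)) = _
    rw [h1, lin_comb εhat (fun k => rho ε V i k)
      (fun k => fun a b => V (a, k) (b, j))]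
    rfl
  have step2 : rho ε V i j = ∑ k, rho ε V i k * lam εhat V k j := by
    have h1 : (Matrix.of fun a b => V (i, a) (j, b))
        = Matrix.of fun a b => ∑ k, lam εhat V k j * V (i, a) (k, b) := by
      ext a b
      simp only [Matrix.of_apply]
      rw [← U6e i a j b]
      exact Finset.sum_congr rfl fun k _ => mul_comm _ _
    show ε (Matrix.of fun a b => V (i, a) (j, b)) = _
    rw [h1, lin_comb ε (fun k => lam εhat V k j)
      (fun k => fun a b => V (i, a) (k, b))]
    exact Finset.sum_congr rfl fun k _ => mul_comm _ _
  rw [show lam εhat V i j = _ from step1, ← step2]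

end MPIpaper
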